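/- The function f(x) = exp(−e^{−x}) is a Pólya frequency function of infinite order; that is, for every n ∈ ℕ and all x, y ∈ ℝ^n one has Δ_n(x)·Δ_n(y)·det[ exp(−e^{−(x_b − y_c)}) ]_{b,c=1,…,n} ≥ 0. -/

import Mathlib

open Finset

/-- The Vandermonde determinant `Δ_m(a) = ∏_{1 ≤ b < c ≤ m} (a_c − a_b)`. -/
noncomputable def vdm {m : ℕ} (a : Fin m → ℝ) : ℝ :=
  ∏ p ∈ Finset.univ.filter (fun p : Fin m × Fin m => p.1 < p.2), (a p.2 - a p.1)

lemma vdm_eq_det {m : ℕ} (a : Fin m → ℝ) : vdm a = (Matrix.vandermonde a).det := by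
  rw [Matrix.det_vandermonde, vdm, Finset.prod_sigma']
  refine Finset.prod_nbij' (fun p => ⟨p.1, p.2⟩) (fun p => (p.1, p.2)) ?_ ?_ ?_ ?_ ?_
  · intro p hp
    simp only [Finset.mem_filter, Finset.mem_univ, true_and] at hp
    simp [Finset.mem_sigma, Finset.mem_Ioi, hp]
  · intro p hp
    simp only [Finset.mem_sigma, Finset.mem_univ, Finset.mem_Ioi, true_and] at hp
    simp [hp]
  · intro p _; rfl
  · intro p _; rfl
  · intro p _; rfl

lemma vdm_comp_perm {m : ℕ} (a : Fin m → ℝ) (σ : Equiv.Perm (Fin m)) :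
    vdm (a ∘ σ) = ((Equiv.Perm.sign σ : ℤ) : ℝ) * vdm a := by
  rw [vdm_eq_det, vdm_eq_det]
  have h : Matrix.vandermonde (a ∘ σ) = (Matrix.vandermonde a).submatrix σ id := by
    ext i j
    simp [Matrix.vandermonde]
  rw [h, Matrix.det_permute]

lemma vdm_pos_of_strictMono {m : ℕ} (a : Fin m → ℝ) (h : StrictMono a) : 0 < vdm a := by
  rw [vdm]
  apply Finset.prod_pos
  intro p hp
  exact sub_pos.mpr (h (Finset.mem_filter.mp hp).2)

lemma vdm_eq_zero_of_not_injective {m : ℕ} (a : Fin m → ℝ) (h : ¬ Function.Injective a) :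
    vdm a = 0 := by
  rw [Function.not_injective_iff] at h
  obtain ⟨i, j, hij, hne⟩ := h
  rcases hne.lt_or_gt with hlt | hlt
  · exact Finset.prod_eq_zero (i := (i, j)) (by simp [hlt]) (by simp [hij])
  · exact Finset.prod_eq_zero (i := (j, i)) (by simp [hlt]) (by simp [hij])


-- exponential polynomial with n distinct frequencies vanishing at n points ⇒ zero
lemma expPoly_zero : ∀ (n : ℕ) (u a t : Fin n → ℝ), Function.Injective u → StrictMono t →
    (∀ c, ∑ b, a b * Real.exp (u b * t c) = 0) → ∀ b, a b = 0 := by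
  intro n
  induction n with
  | zero => intro u a t _ _ _ b; exact b.elim0
  | succ n ih =>
    intro u a t hu ht h
    set g : ℝ → ℝ := fun s => ∑ b, a b * Real.exp ((u b - u 0) * s) with hgdef
    have hgz : ∀ c, g (t c) = 0 := by
      intro c
      have key : Real.exp (u 0 * t c) * g (t c) = 0 := by
        rw [hgdef]
        simp only [Finset.mul_sum]
        rw [← h c]
        refine Finset.sum_congr rfl fun b _ => ?_
        rw [mul_comm (a b), mul_comm (a b), ← mul_assoc, ← Real.exp_add]
        ring_nf
      have := Real.exp_ne_zero (u 0 * t c)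
      exact (mul_eq_zero.mp key).resolve_left this
    have hg' : ∀ s : ℝ, HasDerivAt g (∑ b, a b * ((u b - u 0) * Real.exp ((u b - u 0) * s))) s := by
      intro s
      apply HasDerivAt.fun_sum
      intro b _
      have h1 : HasDerivAt (fun s : ℝ => (u b - u 0) * s) ((u b - u 0) * 1) s :=
        (hasDerivAt_id s).const_mul _
      have h2 := (Real.hasDerivAt_exp ((u b - u 0) * s)).comp s h1
      have h3 := h2.const_mul (a b)
      convert h3 using 1
      · rfl
      · rfl
      ring
    have hroll : ∀ c : Fin n, ∃ s ∈ Set.Ioo (t c.castSucc) (t c.succ),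
        (∑ b, a b * ((u b - u 0) * Real.exp ((u b - u 0) * s))) = 0 := by
      intro c
      have hlt : t c.castSucc < t c.succ := ht (Fin.castSucc_lt_succ : c.castSucc < c.succ)
      have hcont : ContinuousOn g (Set.Icc (t c.castSucc) (t c.succ)) :=
        fun x _ => (hg' x).continuousAt.continuousWithinAt
      exact exists_hasDerivAt_eq_zero hlt hcont (by rw [hgz, hgz]) (fun x _ => hg' x)
    choose s hsmem hs0 using hroll
    have hsm : StrictMono s := by
      intro c c' hcc
      calc s c < t c.succ := (hsmem c).2
        _ ≤ t c'.castSucc := ht.monotone (by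
            simp only [Fin.le_def, Fin.coe_castSucc, Fin.val_succ]
            exact hcc)
        _ < s c' := (hsmem c').1
    have key : ∀ b : Fin n, a b.succ * (u b.succ - u 0) = 0 := by
      apply ih (fun b => u b.succ - u 0) (fun b => a b.succ * (u b.succ - u 0)) s
      · intro b b' e
        simp only [sub_left_inj] at e
        exact Fin.succ_injective n (hu e)
      · exact hsm
      · intro c
        have h0 := hs0 c
        rw [Fin.sum_univ_succ] at h0
        simp only [sub_self, zero_mul, mul_zero, zero_add] at h0
        rw [← h0]
        refine Finset.sum_congr rfl fun b _ => ?_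
        ring
    have ha : ∀ b : Fin n, a b.succ = 0 := by
      intro b
      rcases mul_eq_zero.mp (key b) with h0 | h0
      · exact h0
      · exact absurd (hu (sub_eq_zero.mp h0)) (Fin.succ_ne_zero b)
    have ha0 : a 0 = 0 := by
      have hg0 := hgz 0
      simp only [hgdef] at hg0
      rw [Fin.sum_univ_succ] at hg0
      simp only [ha, zero_mul, Finset.sum_const_zero, add_zero, sub_self] at hg0
      simpa using hg0
    intro b
    cases b using Fin.cases with
    | zero => exact ha0
    | succ b => exact ha b

lemma expMat_det_ne_zero {n : ℕ} (u w : Fin n → ℝ) (hu : StrictMono u)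
    (hw : Function.Injective w) :
    Matrix.det (Matrix.of fun b c : Fin n => Real.exp (u b * w c)) ≠ 0 := by
  intro hdet
  obtain ⟨v, hv, hmv⟩ := (Matrix.exists_mulVec_eq_zero_iff).mpr hdet
  have hz : ∀ b, v b = 0 := by
    apply expPoly_zero n w v u hw hu
    intro c
    have h1 := congrFun hmv c
    simp only [Matrix.mulVec, dotProduct, Matrix.of_apply, Pi.zero_apply] at h1
    rw [← h1]
    refine Finset.sum_congr rfl fun b _ => ?_
    rw [mul_comm (w b) (u c), mul_comm]
  exact hv (funext hz)

lemma expMat_det_pos {n : ℕ} (u w : Fin n → ℝ) (hu : StrictMono u) (hw : StrictMono w) :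
    0 < Matrix.det (Matrix.of fun b c : Fin n => Real.exp (u b * w c)) := by
  set G : ℝ → ℝ := fun r =>
    Matrix.det (Matrix.of fun b c : Fin n => Real.exp (u b * ((1 - r) * w c + r * (c : ℝ))))
    with hGdef
  have hwr : ∀ r ∈ Set.Icc (0:ℝ) 1, StrictMono fun c : Fin n => (1 - r) * w c + r * (c : ℝ) := by
    intro r hr c c' hlt
    have h1 : w c ≤ w c' := (hw hlt).le
    have h2 : (c : ℝ) < (c' : ℝ) := by exact_mod_cast hlt
    have h4 : w c < w c' := hw hlt
    show (1 - r) * w c + r * (c : ℝ) < (1 - r) * w c' + r * (c' : ℝ)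
    rcases eq_or_lt_of_le hr.2 with h | h
    · subst h
      simp only [sub_self, zero_mul, zero_add, one_mul]
      linarith
    · have h3 : 0 < 1 - r := by linarith
      nlinarith [hr.1]
  have hGcont : Continuous G := by
    apply Continuous.matrix_det
    apply continuous_matrix
    intro b c
    simp only [Matrix.of_apply]
    fun_prop
  have hne : ∀ r ∈ Set.Icc (0:ℝ) 1, G r ≠ 0 := fun r hr =>
    expMat_det_ne_zero u _ hu (hwr r hr).injective
  have hG1 : 0 < G 1 := by
    have he : (Matrix.of fun b c : Fin n => Real.exp (u b * ((1 - (1:ℝ)) * w c + 1 * (c : ℝ))))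
        = Matrix.vandermonde (fun b => Real.exp (u b)) := by
      ext b c
      simp only [Matrix.of_apply, Matrix.vandermonde, sub_self, zero_mul, zero_add, one_mul]
      rw [mul_comm, Real.exp_nat_mul]
    show 0 < Matrix.det _
    rw [he, Matrix.det_vandermonde]
    apply Finset.prod_pos
    intro i _
    apply Finset.prod_pos
    intro j hj
    have h5 : u i < u j := hu (Finset.mem_Ioi.mp hj)
    have h6 := Real.exp_lt_exp.mpr h5
    linarith
  have hG0 : G 0 = Matrix.det (Matrix.of fun b c : Fin n => Real.exp (u b * w c)) := by
    show Matrix.det _ = _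
    congr 1
    ext b c
    norm_num
  rw [← hG0]
  rcases lt_trichotomy (G 0) 0 with h | h | h
  · exfalso
    have hsub := intermediate_value_Icc (zero_le_one (α := ℝ)) hGcont.continuousOn
    have h0m : (0:ℝ) ∈ Set.Icc (G 0) (G 1) := ⟨h.le, hG1.le⟩
    obtain ⟨r, hr, hGr⟩ := hsub h0m
    exact hne r hr hGr
  · exact absurd h (hne 0 (by norm_num))
  · exact h

lemma vdm_ne_zero_of_injective {m : ℕ} (a : Fin m → ℝ) (h : Function.Injective a) :
    vdm a ≠ 0 := by
  rw [vdm]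
  rw [Finset.prod_ne_zero_iff]
  intro p hp
  have hlt := (Finset.mem_filter.mp hp).2
  exact sub_ne_zero.mpr fun e => absurd (h e) hlt.ne'

lemma key_ineq {n : ℕ} (u w : Fin n → ℝ) :
    0 ≤ vdm u * vdm w * Matrix.det (Matrix.of fun b c : Fin n => Real.exp (u b * w c)) := by
  by_cases hu : Function.Injective u
  swap
  · rw [vdm_eq_zero_of_not_injective u hu, zero_mul, zero_mul]
  by_cases hw : Function.Injective w
  swap
  · rw [vdm_eq_zero_of_not_injective w hw, mul_zero, zero_mul]
  set σ := Tuple.sort u with hσdef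
  set τ := Tuple.sort w with hτdef
  have hu' : StrictMono (u ∘ σ) :=
    (Tuple.monotone_sort u).strictMono_of_injective (hu.comp σ.injective)
  have hw' : StrictMono (w ∘ τ) :=
    (Tuple.monotone_sort w).strictMono_of_injective (hw.comp τ.injective)
  have hpos := mul_pos (mul_pos (vdm_pos_of_strictMono _ hu') (vdm_pos_of_strictMono _ hw'))
    (expMat_det_pos (u ∘ σ) (w ∘ τ) hu' hw')
  set εσ : ℝ := ((Equiv.Perm.sign σ : ℤ) : ℝ) with hεσdef
  set ετ : ℝ := ((Equiv.Perm.sign τ : ℤ) : ℝ) with hετdef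
  have hεσ : εσ * εσ = 1 := by
    rcases Int.units_eq_one_or (Equiv.Perm.sign σ) with h | h <;> simp [hεσdef, h]
  have hετ : ετ * ετ = 1 := by
    rcases Int.units_eq_one_or (Equiv.Perm.sign τ) with h | h <;> simp [hετdef, h]
  have h1 : vdm (u ∘ σ) = εσ * vdm u := vdm_comp_perm u σ
  have h2 : vdm (w ∘ τ) = ετ * vdm w := vdm_comp_perm w τ
  have h3 : Matrix.det (Matrix.of fun b c : Fin n => Real.exp ((u ∘ σ) b * (w ∘ τ) c))
      = εσ * (ετ * Matrix.det (Matrix.of fun b c : Fin n => Real.exp (u b * w c))) := by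
    have hM : (Matrix.of fun b c : Fin n => Real.exp ((u ∘ σ) b * (w ∘ τ) c))
        = (((Matrix.of fun b c : Fin n => Real.exp (u b * w c)).submatrix σ id).submatrix id τ) :=
      rfl
    rw [hM, Matrix.det_permute', Matrix.det_permute]
    ring
  rw [h1, h2, h3] at hpos
  have heq : (εσ * vdm u) * (ετ * vdm w) *
      (εσ * (ετ * Matrix.det (Matrix.of fun b c : Fin n => Real.exp (u b * w c))))
      = (εσ * εσ) * ((ετ * ετ) *
        (vdm u * vdm w * Matrix.det (Matrix.of fun b c : Fin n => Real.exp (u b * w c)))) := by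
    ring
  rw [heq, hεσ, hετ, one_mul, one_mul] at hpos
  exact hpos.le

/-- the function `x ↦ exp(−e^{−x})` is a Pólya frequency function of infinite
order. -/
theorem exp_neg_exp_neg_isPolyaFrequencyFunction
    (n : ℕ) (x y : Fin n → ℝ) :
    0 ≤ vdm x * vdm y *
      Matrix.det (Matrix.of fun b c : Fin n => Real.exp (-Real.exp (-(x b - y c)))) := by
  set u : Fin n → ℝ := fun b => -Real.exp (-(x b)) with hudef
  set w : Fin n → ℝ := fun c => Real.exp (y c) with hwdef
  have hM : (Matrix.of fun b c : Fin n => Real.exp (-Real.exp (-(x b - y c))))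
      = Matrix.of fun b c : Fin n => Real.exp (u b * w c) := by
    ext b c
    simp only [Matrix.of_apply, hudef, hwdef]
    congr 1
    rw [neg_mul, neg_inj, ← Real.exp_add]
    ring_nf
  rw [hM]
  have hφ : StrictMono (fun t : ℝ => -Real.exp (-t)) := by
    intro s t hst
    simp only [neg_lt_neg_iff]
    exact Real.exp_lt_exp.mpr (neg_lt_neg hst)
  by_cases hx : Function.Injective x
  swap
  · rw [vdm_eq_zero_of_not_injective x hx, zero_mul, zero_mul]
  by_cases hy : Function.Injective y
  swap
  · rw [vdm_eq_zero_of_not_injective y hy, mul_zero, zero_mul]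
  have hu : Function.Injective u := fun b b' e => hx (hφ.injective e)
  have hw : Function.Injective w := fun c c' e => hy (Real.exp_injective e)
  have hxu : 0 ≤ vdm x * vdm u := by
    rw [vdm, vdm, ← Finset.prod_mul_distrib]
    apply Finset.prod_nonneg
    intro p _
    rcases le_total (x p.1) (x p.2) with h | h
    · exact mul_nonneg (sub_nonneg.mpr h) (sub_nonneg.mpr (hφ.monotone h))
    · exact mul_nonneg_of_nonpos_of_nonpos (sub_nonpos.mpr h) (sub_nonpos.mpr (hφ.monotone h))
  have hyw : 0 ≤ vdm y * vdm w := by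
    rw [vdm, vdm, ← Finset.prod_mul_distrib]
    apply Finset.prod_nonneg
    intro p _
    rcases le_total (y p.1) (y p.2) with h | h
    · exact mul_nonneg (sub_nonneg.mpr h) (sub_nonneg.mpr (Real.exp_le_exp.mpr h))
    · exact mul_nonneg_of_nonpos_of_nonpos (sub_nonpos.mpr h) (sub_nonpos.mpr (Real.exp_le_exp.mpr h))
  have hsD := key_ineq u w
  set D := Matrix.det (Matrix.of fun b c : Fin n => Real.exp (u b * w c)) with hDdef
  set s : ℝ := vdm u * vdm w with hsdef
  have hs : s ≠ 0 := mul_ne_zero (vdm_ne_zero_of_injective u hu) (vdm_ne_zero_of_injective w hw)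
  have hss : 0 < s * s := mul_self_pos.mpr hs
  have hts : 0 ≤ (vdm x * vdm y) * s := by
    have : (vdm x * vdm y) * s = (vdm x * vdm u) * (vdm y * vdm w) := by rw [hsdef]; ring
    rw [this]
    exact mul_nonneg hxu hyw
  nlinarith [mul_nonneg hts hsD]
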